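/- Let 0 < r < s and 0 < θ < π. Let P = (r·cos(θ/2), r·sin(θ/2)) and Q = (r·cos(θ/2), −r·sin(θ/2)), two points of B at equal Euclidean distance r from the origin with angular separation θ, and set D = (r + s²/r)/(2·cos(θ/2)) (note D > s). Then the minimum over t ∈ [0,1] of ‖exp_P(t·log_P(Q))‖ — the smallest Euclidean distance from the origin to a point of the geodesic segment joining P and Q — equals D − √(D² − s²). -/

import Mathlib

noncomputable section

open Real MeasureTheory Set
open scoped InnerProductSpace ENNReal NNReal Classical

/-- Points of the plane `ℝ²`, with the Euclidean inner product and norm. -/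
abbrev Pt : Type := EuclideanSpace ℝ (Fin 2)

namespace HypFL

/-- Inverse hyperbolic tangent. -/
def artanh (x : ℝ) : ℝ := (1 / 2) * Real.log ((1 + x) / (1 - x))

/-- The Poincaré disc `B = {x : k‖x‖² < 1}` of curvature `-k`. -/
def disc (k : ℝ) : Set Pt := {x : Pt | k * ‖x‖ ^ 2 < 1}

/-- Möbius addition on the Poincaré disc. -/
def mAdd (k : ℝ) (x y : Pt) : Pt :=
  (1 + 2 * k * ⟪x, y⟫_ℝ + k ^ 2 * ‖x‖ ^ 2 * ‖y‖ ^ 2)⁻¹ •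
    ((1 + 2 * k * ⟪x, y⟫_ℝ + k * ‖y‖ ^ 2) • x + (1 - k * ‖x‖ ^ 2) • y)

/-- Hyperbolic distance on the Poincaré disc. -/
def hdist (k : ℝ) (x y : Pt) : ℝ :=
  (2 / Real.sqrt k) * artanh (Real.sqrt k * ‖mAdd k (-x) y‖)

/-- Logarithmic map at `p`. -/
def logMap (k : ℝ) (p x : Pt) : Pt :=
  if x = p then 0
  else ((((1 - k * ‖p‖ ^ 2) / Real.sqrt k) * artanh (Real.sqrt k * ‖mAdd k (-p) x‖))
      / ‖mAdd k (-p) x‖) • mAdd k (-p) x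

/-- Exponential map at `p`. -/
def expMap (k : ℝ) (p v : Pt) : Pt :=
  if v = 0 then p
  else mAdd k p ((Real.tanh (Real.sqrt k * ‖v‖ / (1 - k * ‖p‖ ^ 2)) / (Real.sqrt k * ‖v‖)) • v)

/-- The geodesic segment `[x, y] = {exp_x (t • log_x y) : t ∈ [0,1]}`. -/
def geoSeg (k : ℝ) (x y : Pt) : Set Pt :=
  (fun t : ℝ => expMap k x (t • logMap k x y)) '' Set.Icc (0 : ℝ) 1

/-- A set is geodesically convex if it contains the geodesic segment between any two
of its points. -/
def GConvex (k : ℝ) (S : Set Pt) : Prop := ∀ x ∈ S, ∀ y ∈ S, geoSeg k x y ⊆ S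

/-- The geodesic convex hull of `D`: the intersection of all geodesically convex subsets
of the Poincaré disc containing `D`. -/
def gconv (k : ℝ) (D : Set Pt) : Set Pt :=
  ⋂₀ {S : Set Pt | S ⊆ disc k ∧ GConvex k S ∧ D ⊆ S}

/-- The set of extreme points of a (finite) set `D`: points `z ∈ D` with
`z ∉ gconv (D \ {z})`. -/
def extremePts (k : ℝ) (D : Set Pt) : Set Pt := {z ∈ D | z ∉ gconv k (D \ {z})}

/-- The `CCW` predicate of the Poincaré Graham scan. -/
def ccw (k : ℝ) (x t z : Pt) : ℝ :=
  (‖logMap k x t‖⁻¹ • logMap k x t) 0 * (‖logMap k x z‖⁻¹ • logMap k x z) 1 -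
    (‖logMap k x t‖⁻¹ • logMap k x t) 1 * (‖logMap k x z‖⁻¹ • logMap k x z) 0

/-- `s = 1/√k`. -/
def sOf (k : ℝ) : ℝ := 1 / Real.sqrt k

end HypFL

namespace HypFL

/-- The polar angle of a nonzero point of `ℝ²`, normalized to lie in `(0, 2π]`. -/
def polarAngle (x : Pt) : ℝ :=
  if 0 < Complex.arg ((x 0 : ℂ) + (x 1 : ℂ) * Complex.I) then
    Complex.arg ((x 0 : ℂ) + (x 1 : ℂ) * Complex.I)
  else Complex.arg ((x 0 : ℂ) + (x 1 : ℂ) * Complex.I) + 2 * π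

/-- The point of `ℝ²` with Euclidean radius `r` and polar angle `θ`. -/
def ptPolar (r θ : ℝ) : Pt := WithLp.toLp 2 ![r * Real.cos θ, r * Real.sin θ]

/-- The hyperbolic radius `R_H = s ln((s+R)/(s−R))` corresponding to Euclidean radius `R`. -/
def RH (k R : ℝ) : ℝ := sOf k * Real.log ((sOf k + R) / (sOf k - R))

/-- Number of angular quantization bins: `N_Θ = ⌈4πs sinh(R_H/s)/ε⌉`. -/
def NTheta (k R ε : ℝ) : ℕ := ⌈4 * π * sOf k * Real.sinh (RH k R / sOf k) / ε⌉₊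

/-- Number of radial quantization bins: `N_R = ⌈2R_H/ε⌉`. -/
def NRad (k R ε : ℝ) : ℕ := ⌈2 * RH k R / ε⌉₊

/-- The quantization bin `B(n₁, n₂)`: points whose polar angle lies in
`((n₁−1)·2π/N_Θ, n₁·2π/N_Θ]` and whose hyperbolic distance to the origin lies in
`((n₂−1)·R_H/N_R, n₂·R_H/N_R]`. -/
def qbin (k R ε : ℝ) (n₁ n₂ : ℕ) : Set Pt :=
  {x : Pt |
    polarAngle x ∈ Set.Ioc (((n₁ : ℝ) - 1) * (2 * π / NTheta k R ε))
      ((n₁ : ℝ) * (2 * π / NTheta k R ε)) ∧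
    hdist k 0 x ∈ Set.Ioc (((n₂ : ℝ) - 1) * (RH k R / NRad k R ε))
      ((n₂ : ℝ) * (RH k R / NRad k R ε))}

/-- The Euclidean radius corresponding to hyperbolic radius `h`:
`s(e^{h/s} − 1)/(e^{h/s} + 1)`. -/
def eucOfHyp (k h : ℝ) : ℝ :=
  sOf k * (Real.exp (h / sOf k) - 1) / (Real.exp (h / sOf k) + 1)

/-- The `ε`-Poincaré quantization map `PQ_ε`: each point of the bin `B(n₁, n₂)` is sent to
the bin center, namely the point with polar angle `(n₁ − 1/2)·2π/N_Θ` and hyperbolic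
distance `(n₂ − 1/2)·R_H/N_R` from the origin; the origin is fixed. -/
def PQ (k R ε : ℝ) (x : Pt) : Pt :=
  if x = 0 then 0
  else
    ptPolar
      (eucOfHyp k
        (((⌈hdist k 0 x / (RH k R / NRad k R ε)⌉₊ : ℝ) - 1 / 2) * (RH k R / NRad k R ε)))
      (((⌈polarAngle x / (2 * π / NTheta k R ε)⌉₊ : ℝ) - 1 / 2) * (2 * π / NTheta k R ε))

end HypFL

namespace HypFL

-- ==================== auxiliary lemmas ====================

lemma artanh_pos' {x : ℝ} (h0 : 0 < x) (h1 : x < 1) : 0 < artanh x := by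
  have h2 : (1:ℝ) < (1+x)/(1-x) := (one_lt_div (by linarith)).2 (by linarith)
  have := Real.log_pos h2
  unfold artanh; linarith

lemma tanh_artanh' {x : ℝ} (h0 : 0 ≤ x) (h1 : x < 1) : Real.tanh (artanh x) = x := by
  have hu : (0:ℝ) < (1+x)/(1-x) := div_pos (by linarith) (by linarith)
  have he2 : Real.exp (artanh x) ^ 2 = (1+x)/(1-x) := by
    rw [sq, ← Real.exp_add, show artanh x + artanh x = Real.log ((1+x)/(1-x)) by unfold artanh; ring,
      Real.exp_log hu]
  have hepos := Real.exp_pos (artanh x)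
  have he2' : Real.exp (artanh x) ^ 2 * (1 - x) = 1 + x := by
    rw [he2, div_mul_cancel₀ _ (show (1:ℝ)-x ≠ 0 by linarith)]
  rw [Real.tanh_eq_sinh_div_cosh, Real.sinh_eq, Real.cosh_eq, Real.exp_neg]
  have hden : (Real.exp (artanh x) + (Real.exp (artanh x))⁻¹) / 2 ≠ 0 := by positivity
  rw [div_eq_iff hden]
  have hne := hepos.ne'
  field_simp
  linear_combination he2'

lemma tanh_sq_lt_one (x : ℝ) : Real.tanh x ^ 2 < 1 := by
  rw [Real.tanh_eq_sinh_div_cosh, div_pow, div_lt_one (by positivity)]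
  nlinarith [Real.sinh_lt_cosh x, Real.sinh_lt_cosh (-x), Real.sinh_neg x, Real.cosh_neg x,
    Real.cosh_pos x]

lemma continuous_tanh' : Continuous Real.tanh := by
  have h : Real.tanh = fun x => Real.sinh x / Real.cosh x := funext Real.tanh_eq_sinh_div_cosh
  rw [h]; exact Real.continuous_sinh.div Real.continuous_cosh fun x => (Real.cosh_pos x).ne'

lemma inner2 (x y : Pt) : ⟪x, y⟫_ℝ = x 0 * y 0 + x 1 * y 1 := by
  simp [PiLp.inner_apply, Fin.sum_univ_two, RCLike.inner_apply]
  ring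

lemma normsq2 (x : Pt) : ‖x‖^2 = x 0^2 + x 1^2 := by
  rw [← real_inner_self_eq_norm_sq, inner2]; ring

lemma den_pos (k : ℝ) (x y : Pt) (hk : 0 < k) (hx : k * ‖x‖^2 < 1) (hy : k * ‖y‖^2 < 1) :
    0 < 1 + 2*k*⟪x, y⟫_ℝ + k^2*‖x‖^2*‖y‖^2 := by
  nlinarith [abs_real_inner_le_norm x y, neg_abs_le ⟪x,y⟫_ℝ, le_abs_self ⟪x,y⟫_ℝ,
    sq_nonneg (‖x‖ - ‖y‖), sq_nonneg (1 - k*‖x‖*‖y‖), norm_nonneg x, norm_nonneg y,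
    mul_pos (sub_pos.2 hx) (sub_pos.2 hy)]

lemma normsq_comb (a b : ℝ) (x y : Pt) :
    ‖a•x + b•y‖^2 = a^2*‖x‖^2 + 2*(a*b)*⟪x,y⟫_ℝ + b^2*‖y‖^2 := by
  rw [norm_add_sq_real, real_inner_smul_left, real_inner_smul_right, norm_smul, norm_smul,
    mul_pow, mul_pow, Real.norm_eq_abs, Real.norm_eq_abs, sq_abs, sq_abs]
  ring

lemma mAdd_norm (k : ℝ) (x y : Pt)
    (hd : 1 + 2*k*⟪x, y⟫_ℝ + k^2*‖x‖^2*‖y‖^2 ≠ 0) :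
    1 - k * ‖mAdd k x y‖^2 =
      (1 - k*‖x‖^2) * (1 - k*‖y‖^2) / (1 + 2*k*⟪x, y⟫_ℝ + k^2*‖x‖^2*‖y‖^2) := by
  have key : ∀ p q t : ℝ, 1+2*k*t+k^2*p*q ≠ 0 →
      1 - k*(((1+2*k*t+k^2*p*q)⁻¹)^2 * ((1+2*k*t+k*q)^2*p +
        2*((1+2*k*t+k*q)*(1-k*p))*t + (1-k*p)^2*q)) = (1-k*p)*(1-k*q)/(1+2*k*t+k^2*p*q) := by
    intro p q t h
    have e1 : (1+2*k*t+k^2*p*q)⁻¹ * (1+2*k*t+k^2*p*q) = 1 := inv_mul_cancel₀ h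
    have key : (1+2*k*t+k^2*p*q)^2 - k*((1+2*k*t+k*q)^2*p +
        2*((1+2*k*t+k*q)*(1-k*p))*t + (1-k*p)^2*q) = (1-k*p)*(1-k*q)*(1+2*k*t+k^2*p*q) := by ring
    rw [div_eq_mul_inv]
    linear_combination ((1+2*k*t+k^2*p*q)⁻¹)^2 * key + ((1-k*p)*(1-k*q)*(1+2*k*t+k^2*p*q)⁻¹ - 1 - (1+2*k*t+k^2*p*q)⁻¹ * (1+2*k*t+k^2*p*q)) * e1
  rw [mAdd, norm_smul, mul_pow, normsq_comb, Real.norm_eq_abs, sq_abs]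
  exact key (‖x‖^2) (‖y‖^2) ⟪x,y⟫_ℝ hd

lemma mAdd_zero (k : ℝ) (x : Pt) : mAdd k x 0 = x := by
  simp [mAdd]

private lemma comb_eq (d A b e a b' : ℝ) (x y : Pt) :
    d • (A • x + b • (e • (a • (-x) + b' • y))) =
      (d*(A - b*(e*a))) • x + (d*(b*(e*b'))) • y := by module

private lemma aux1 (A a b e : ℝ) (he : e ≠ 0) (h : A*e = a*b) : A - b*(e⁻¹*a) = 0 := by
  field_simp
  linear_combination h

private lemma aux2 (D b e : ℝ) (hb : b ≠ 0) (he : e ≠ 0) (h : D*e = b*b) :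
    D⁻¹*(b*(e⁻¹*b)) = 1 := by
  have hD : D = b*b*e⁻¹ := by field_simp; linear_combination h
  rw [hD]
  field_simp

private lemma aux3 (k t p q : ℝ) (he : 1 + 2*k*(-t) + k^2*p*q ≠ 0) :
    (1 + 2*k*((1 + 2*k*(-t) + k^2*p*q)⁻¹ * ((1 + 2*k*(-t) + k*q) * (-p) + (1 - k*p) * t))
      + k*(((1 + 2*k*(-t) + k^2*p*q)⁻¹)^2 * ((1 + 2*k*(-t) + k*q)^2*p
          - 2*((1 + 2*k*(-t) + k*q)*(1 - k*p))*t + (1 - k*p)^2*q)))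
      * (1 + 2*k*(-t) + k^2*p*q) = (1 + 2*k*(-t) + k*q) * (1 - k*p) := by
  set E := 1 + 2*k*(-t) + k^2*p*q with hE
  set X := (1 + 2*k*(-t) + k*q) * (-p) + (1 - k*p) * t with hX
  set Y := (1 + 2*k*(-t) + k*q)^2*p - 2*((1 + 2*k*(-t) + k*q)*(1 - k*p))*t + (1 - k*p)^2*q with hY
  set Z := (1 + 2*k*(-t) + k*q) * (1 - k*p) with hZ
  have e1 : E⁻¹*E = 1 := inv_mul_cancel₀ he
  have key : E^2 + 2*k*X*E + k*Y = Z*E := by rw [hE, hX, hY, hZ]; ring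
  calc (1 + 2*k*(E⁻¹ * X) + k*(E⁻¹^2*Y))*E = E + 2*k*X + k*Y*E⁻¹ := by
        linear_combination (2*k*X + k*Y*E⁻¹)*e1
    _ = Z := by linear_combination E⁻¹*key + (Z - E - 2*k*X)*e1

private lemma aux4 (k t p q : ℝ) (he : 1 + 2*k*(-t) + k^2*p*q ≠ 0) :
    (1 + 2*k*((1 + 2*k*(-t) + k^2*p*q)⁻¹ * ((1 + 2*k*(-t) + k*q) * (-p) + (1 - k*p) * t))
      + k^2*p*(((1 + 2*k*(-t) + k^2*p*q)⁻¹)^2 * ((1 + 2*k*(-t) + k*q)^2*p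
          - 2*((1 + 2*k*(-t) + k*q)*(1 - k*p))*t + (1 - k*p)^2*q)))
      * (1 + 2*k*(-t) + k^2*p*q) = (1 - k*p) * (1 - k*p) := by
  set E := 1 + 2*k*(-t) + k^2*p*q with hE
  set X := (1 + 2*k*(-t) + k*q) * (-p) + (1 - k*p) * t with hX
  set Y := (1 + 2*k*(-t) + k*q)^2*p - 2*((1 + 2*k*(-t) + k*q)*(1 - k*p))*t + (1 - k*p)^2*q with hY
  set Z := (1 - k*p) * (1 - k*p) with hZ
  have e1 : E⁻¹*E = 1 := inv_mul_cancel₀ he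
  have key : E^2 + 2*k*X*E + k^2*p*Y = Z*E := by rw [hE, hX, hY, hZ]; ring
  calc (1 + 2*k*(E⁻¹ * X) + k^2*p*(E⁻¹^2*Y))*E = E + 2*k*X + k^2*p*Y*E⁻¹ := by
        linear_combination (2*k*X + k^2*p*Y*E⁻¹)*e1
    _ = Z := by linear_combination E⁻¹*key + (Z - E - 2*k*X)*e1

set_option maxHeartbeats 1000000 in
lemma mAdd_cancel (k : ℝ) (x y : Pt)
    (he : 1 + 2*k*(-⟪x,y⟫_ℝ) + k^2*‖x‖^2*‖y‖^2 ≠ 0)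
    (hb : 1 - k*‖x‖^2 ≠ 0) :
    mAdd k x (mAdd k (-x) y) = y := by
  set w := mAdd k (-x) y with hw
  have hwcomb : w = (1 + 2*k*(-⟪x,y⟫_ℝ) + k^2*‖x‖^2*‖y‖^2)⁻¹ •
      ((1 + 2*k*(-⟪x,y⟫_ℝ) + k*‖y‖^2) • (-x) + (1 - k*‖x‖^2) • y) := by
    rw [hw, mAdd, inner_neg_left, norm_neg]
  have hip : ⟪x, w⟫_ℝ = (1 + 2*k*(-⟪x,y⟫_ℝ) + k^2*‖x‖^2*‖y‖^2)⁻¹ *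
      ((1 + 2*k*(-⟪x,y⟫_ℝ) + k*‖y‖^2) * (-‖x‖^2) + (1 - k*‖x‖^2) * ⟪x,y⟫_ℝ) := by
    rw [hwcomb, real_inner_smul_right, inner_add_right, real_inner_smul_right,
      real_inner_smul_right, inner_neg_right, real_inner_self_eq_norm_sq]
  have hnq : ‖w‖^2 = ((1 + 2*k*(-⟪x,y⟫_ℝ) + k^2*‖x‖^2*‖y‖^2)⁻¹)^2 *
      ((1 + 2*k*(-⟪x,y⟫_ℝ) + k*‖y‖^2)^2*‖x‖^2
        - 2*((1 + 2*k*(-⟪x,y⟫_ℝ) + k*‖y‖^2)*(1 - k*‖x‖^2))*⟪x,y⟫_ℝ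
        + (1 - k*‖x‖^2)^2*‖y‖^2) := by
    rw [hwcomb, norm_smul, mul_pow, Real.norm_eq_abs, sq_abs, normsq_comb, inner_neg_left,
      norm_neg]
    ring
  have hA2 := aux3 k ⟪x,y⟫_ℝ (‖x‖^2) (‖y‖^2) he
  have hD2 := aux4 k ⟪x,y⟫_ℝ (‖x‖^2) (‖y‖^2) he
  rw [mAdd, hip, hnq, hwcomb, comb_eq,
    aux1 _ _ _ _ he (by linear_combination hA2),
    aux2 _ _ _ hb he (by linear_combination hD2)]
  simp

set_option maxHeartbeats 2000000 in
lemma core (k r c sn m D s : ℝ) (hk : 0 < k) (hr : 0 < r) (hc : 0 < c)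
    (hkr : k*r^2 < 1) (hpyth : c^2 + sn^2 = 1) (hks : k*s^2 = 1)
    (hDrel : 2*k*D*c*r = k*r^2 + 1)
    (P y : Pt) (hP0 : P 0 = r*c) (hP1 : P 1 = r*sn)
    (hy0 : y 0 = m*(2*k*r^2*c*sn)) (hy1 : y 1 = m*(1 - k*r^2*(c^2 - sn^2)))
    (hyk : k*‖y‖^2 < 1) :
    ‖mAdd k P y‖^2 + s^2 = 2*D*(mAdd k P y 0) := by
  have hPn : ‖P‖^2 = r^2 := by rw [normsq2, hP0, hP1]; linear_combination (r^2)*hpyth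
  have hyn : ‖y‖^2 = m^2*((2*k*r^2*c*sn)^2 + (1 - k*r^2*(c^2-sn^2))^2) := by
    rw [normsq2, hy0, hy1]; ring
  have hip : ⟪P,y⟫_ℝ = m*((r*c)*(2*k*r^2*c*sn) + (r*sn)*(1 - k*r^2*(c^2-sn^2))) := by
    rw [inner2, hP0, hP1, hy0, hy1]; ring
  have hdpos : 0 < 1 + 2*k*⟪P, y⟫_ℝ + k^2*‖P‖^2*‖y‖^2 :=
    den_pos k P y hk (by rw [hPn]; exact hkr) hyk
  rw [hip, hPn, hyn] at hdpos
  set d := 1 + 2*k*(m*((r*c)*(2*k*r^2*c*sn) + (r*sn)*(1 - k*r^2*(c^2-sn^2))))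
      + k^2*r^2*(m^2*((2*k*r^2*c*sn)^2 + (1 - k*r^2*(c^2-sn^2))^2)) with hd
  have hdne : d ≠ 0 := ne_of_gt hdpos
  have hz : mAdd k P y = d⁻¹ •
      ((1 + 2*k*(m*((r*c)*(2*k*r^2*c*sn) + (r*sn)*(1 - k*r^2*(c^2-sn^2))))
        + k*(m^2*((2*k*r^2*c*sn)^2 + (1 - k*r^2*(c^2-sn^2))^2))) • P + (1 - k*r^2) • y) := by
    simp only [mAdd, hip, hPn, hyn, hd]
  set N0 := (1 + 2*k*(m*((r*c)*(2*k*r^2*c*sn) + (r*sn)*(1 - k*r^2*(c^2-sn^2))))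
        + k*(m^2*((2*k*r^2*c*sn)^2 + (1 - k*r^2*(c^2-sn^2))^2))) * (r*c)
      + (1 - k*r^2) * (m*(2*k*r^2*c*sn)) with hN0
  set N1 := (1 + 2*k*(m*((r*c)*(2*k*r^2*c*sn) + (r*sn)*(1 - k*r^2*(c^2-sn^2))))
        + k*(m^2*((2*k*r^2*c*sn)^2 + (1 - k*r^2*(c^2-sn^2))^2))) * (r*sn)
      + (1 - k*r^2) * (m*(1 - k*r^2*(c^2-sn^2))) with hN1
  have h0 : mAdd k P y 0 = d⁻¹ * N0 := by
    rw [hz, hN0]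
    simp only [PiLp.smul_apply, PiLp.add_apply, smul_eq_mul, hP0, hy0]
    try ring
  have h1 : mAdd k P y 1 = d⁻¹ * N1 := by
    rw [hz, hN1]
    simp only [PiLp.smul_apply, PiLp.add_apply, smul_eq_mul, hP1, hy1]
    try ring
  have hz0 : mAdd k P y 0 * d = N0 := by
    rw [h0, mul_comm d⁻¹ N0, mul_assoc, inv_mul_cancel₀ hdne, mul_one]
  have hz1 : mAdd k P y 1 * d = N1 := by
    rw [h1, mul_comm d⁻¹ N1, mul_assoc, inv_mul_cancel₀ hdne, mul_one]
  have hn : ‖mAdd k P y‖^2 = (mAdd k P y 0)^2 + (mAdd k P y 1)^2 := normsq2 _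
  have key : k*(N0^2+N1^2)*(r*c) + (r*c)*d^2 = (k*r^2+1)*N0*d := by
    rw [hN0, hN1, hd]
    linear_combination ((1)*k*r^3*c + (2)*k^2*r^3*c*m^2 + (6)*k^2*r^4*c*sn*m + (1)*k^3*r^3*c*m^4 + (4)*k^3*r^4*c*sn*m^3 + (12)*k^3*r^5*c*sn^2*m^2 + (-4)*k^3*r^5*c^3*m^2 + (-2)*k^3*r^6*c*sn*m + (4)*k^3*r^6*c*sn^3*m + (4)*k^3*r^6*c^3*sn*m + (4)*k^4*r^5*c*sn^2*m^4 + (-4)*k^4*r^5*c^3*m^4 + (2)*k^4*r^6*c*sn*m^3 + (12)*k^4*r^6*c*sn^3*m^3 + (-4)*k^4*r^6*c^3*sn*m^3 + (-4)*k^4*r^7*c*sn^2*m^2 + (14)*k^4*r^7*c*sn^4*m^2 + (16)*k^4*r^7*c^3*sn^2*m^2 + (2)*k^4*r^7*c^5*m^2 + (6)*k^5*r^7*c*sn^4*m^4 + (-4)*k^5*r^7*c^3*sn^2*m^4 + (6)*k^5*r^7*c^5*m^4 + (-2)*k^5*r^8*c*sn*m^3 + (4)*k^5*r^8*c*sn^3*m^3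 + (12)*k^5*r^8*c*sn^5*m^3 + (-4)*k^5*r^8*c^3*sn*m^3 + (8)*k^5*r^8*c^3*sn^3*m^3 + (-4)*k^5*r^8*c^5*sn*m^3 + (-4)*k^5*r^9*c*sn^4*m^2 + (4)*k^5*r^9*c*sn^6*m^2 + (-4)*k^5*r^9*c^3*sn^2*m^2 + (8)*k^5*r^9*c^3*sn^4*m^2 + (4)*k^5*r^9*c^5*sn^2*m^2 + (4)*k^6*r^9*c*sn^6*m^4 + (4)*k^6*r^9*c^3*sn^4*m^4 + (-4)*k^6*r^9*c^5*sn^2*m^4 + (-4)*k^6*r^9*c^7*m^4 + (-4)*k^6*r^10*c*sn^3*m^3 + (2)*k^6*r^10*c*sn^5*m^3 + (4)*k^6*r^10*c*sn^7*m^3 + (4)*k^6*r^10*c^3*sn*m^3 + (4)*k^6*r^10*c^3*sn^3*m^3 + (12)*k^6*r^10*c^3*sn^5*m^3 + (2)*k^6*r^10*c^5*sn*m^3 + (12)*k^6*r^10*c^5*sn^3*m^3 + (4)*k^6*r^10*c^7*sn*m^3 + (1)*k^7*r^11*c*sn^8*m^4 + (4)*k^7*r^11*c^3*sn^6*m^4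 + (6)*k^7*r^11*c^5*sn^4*m^4 + (4)*k^7*r^11*c^7*sn^2*m^4 + (1)*k^7*r^11*c^9*m^4 + (-2)*k^7*r^12*c*sn^5*m^3 + (-4)*k^7*r^12*c^3*sn^3*m^3 + (-2)*k^7*r^12*c^5*sn*m^3) * hpyth
  apply mul_left_cancel₀ (show k*(r*c)*d^2 ≠ 0 by positivity)
  linear_combination (k*(r*c)*d^2) * hn + ((r*c)*d^2) * hks
    + (-(mAdd k P y 0*d^2)) * hDrel
    + (k*(r*c)*(mAdd k P y 0*d + N0) - (k*r^2+1)*d) * hz0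
    + (k*(r*c)*(mAdd k P y 1*d + N1)) * hz1 + key


lemma coord_le_norm (z : Pt) : z 0 ≤ ‖z‖ := by
  nlinarith [normsq2 z, sq_nonneg (z 1), norm_nonneg z, sq_nonneg (‖z‖ - z 0)]

lemma lt_one_of_sq (x : ℝ) (h : x^2 < 1) (hx : 0 < x) : x < 1 := by nlinarith

lemma norm_lt_s (k s : ℝ) (z : Pt) (hk : 0 < k) (hs0 : 0 < s) (hks : k*s^2 = 1)
    (h : k*‖z‖^2 < 1) : ‖z‖ < s := by
  nlinarith [mul_nonneg hk.le (sq_nonneg (‖z‖ - s)), mul_pos hk hs0, norm_nonneg z]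

lemma lower_bound_lemma (D s : ℝ) (z : Pt) (hD0 : 0 < D) (hsD : s ≤ D) (hs0 : 0 < s)
    (hz : ‖z‖^2 + s^2 = 2*D*(z 0)) : D - Real.sqrt (D^2 - s^2) ≤ ‖z‖ := by
  have hle := coord_le_norm z
  have hquad : ‖z‖^2 - 2*D*‖z‖ + s^2 ≤ 0 := by nlinarith [norm_nonneg z]
  have hE : 0 ≤ D^2 - s^2 := by nlinarith
  by_contra hlt
  push_neg at hlt
  nlinarith [Real.sq_sqrt hE, Real.sqrt_nonneg (D^2 - s^2)]

lemma min_point_lemma (D s : ℝ) (z : Pt) (hD0 : 0 < D) (hsD : s ≤ D) (hs0 : 0 < s)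
    (hz : ‖z‖^2 + s^2 = 2*D*(z 0)) (hz1 : z 1 = 0) (hzd : ‖z‖ < s) :
    ‖z‖ = D - Real.sqrt (D^2 - s^2) := by
  have hzn : ‖z‖^2 = (z 0)^2 := by rw [normsq2, hz1]; ring
  have hz0pos : 0 < z 0 := by nlinarith [norm_nonneg z]
  have hznorm : ‖z‖ = z 0 := by
    have habs : ‖z‖ = |z 0| := by
      rw [← Real.sqrt_sq_eq_abs, ← hzn, Real.sqrt_sq (norm_nonneg _)]
    rw [habs, abs_of_pos hz0pos]
  have hz0lt : z 0 < s := by rw [← hznorm]; exact hzd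
  have hsqrt : Real.sqrt (D^2 - s^2) = D - z 0 := by
    rw [show D^2 - s^2 = (D - z 0)^2 from by linear_combination hzn - hz]
    exact Real.sqrt_sq (by nlinarith)
  rw [hznorm, hsqrt]
  ring


set_option maxHeartbeats 4000000

/-- For `P = (r cos(θ/2), r sin(θ/2))` and `Q = (r cos(θ/2), −r sin(θ/2))`
with `0 < r < s` and `0 < θ < π`, the minimum Euclidean distance from the origin to a
point of the geodesic segment joining `P` and `Q` equals `D − √(D² − s²)`, where
`D = (r + s²/r)/(2 cos(θ/2))`. -/
theorem min_dist_origin_geodesic (k : ℝ) (hk : 0 < k) (r θ : ℝ) (hr : 0 < r)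
    (hrs : r < sOf k) (hθ0 : 0 < θ) (hθπ : θ < π) (P Q : Pt)
    (hP : P = ptPolar r (θ / 2)) (hQ : Q = ptPolar r (-(θ / 2)))
    (D : ℝ) (hD : D = (r + (sOf k) ^ 2 / r) / (2 * Real.cos (θ / 2))) :
    IsLeast ((fun t : ℝ => ‖expMap k P (t • logMap k P Q)‖) '' Set.Icc (0 : ℝ) 1)
      (D - Real.sqrt (D ^ 2 - (sOf k) ^ 2)) := by
  have hsk : 0 < Real.sqrt k := Real.sqrt_pos.2 hk
  have hs2 : sOf k ^ 2 = 1/k := by rw [sOf, div_pow, one_pow, Real.sq_sqrt hk.le]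
  have hs0 : 0 < sOf k := by rw [sOf]; positivity
  have hks : k * sOf k ^ 2 = 1 := by rw [hs2]; field_simp
  have hkr : k * r^2 < 1 := by
    nlinarith [hks, mul_pos hk (mul_pos (sub_pos.2 hrs) (show 0 < sOf k + r by linarith))]
  obtain ⟨c, hcdef⟩ : ∃ x, Real.cos (θ/2) = x := ⟨_, rfl⟩
  obtain ⟨sn, hsndef⟩ : ∃ x, Real.sin (θ/2) = x := ⟨_, rfl⟩
  rw [hcdef] at hD
  have hpyth : c^2 + sn^2 = 1 := by
    rw [← hcdef, ← hsndef]; linear_combination Real.sin_sq_add_cos_sq (θ/2)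
  have hc : 0 < c := by
    rw [← hcdef]; exact Real.cos_pos_of_mem_Ioo ⟨by linarith [Real.pi_pos], by linarith⟩
  have hc1 : c ≤ 1 := by rw [← hcdef]; exact Real.cos_le_one _
  have hsn : 0 < sn := by
    rw [← hsndef]; exact Real.sin_pos_of_pos_of_lt_pi (by linarith) (by linarith)
  have hrsn : 0 < r * sn := mul_pos hr hsn
  have h2rsn : 0 < 2*r*sn := by nlinarith
  have hW01 : 0 < 1 - k*r^2*(c^2 - sn^2) := by
    have h1 : 0 ≤ k*r^2*(1 - (c^2 - sn^2)) :=
      mul_nonneg (mul_nonneg hk.le (sq_nonneg r)) (by nlinarith [sq_nonneg sn])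
    nlinarith [mul_pos hk (mul_pos hr hr)]
  have hP0 : P 0 = r * c := by rw [hP]; simp [ptPolar, hcdef]
  have hP1 : P 1 = r * sn := by rw [hP]; simp [ptPolar, hsndef]
  have hQ0 : Q 0 = r * c := by rw [hQ]; simp [ptPolar, Real.cos_neg, hcdef]
  have hQ1 : Q 1 = -(r * sn) := by rw [hQ]; simp [ptPolar, Real.sin_neg, hsndef]
  have hPn : ‖P‖^2 = r^2 := by rw [normsq2, hP0, hP1]; linear_combination (r^2)*hpyth
  have hQn : ‖Q‖^2 = r^2 := by rw [normsq2, hQ0, hQ1]; linear_combination (r^2)*hpyth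
  have hPd : k*‖P‖^2 < 1 := by rw [hPn]; exact hkr
  have hQd : k*‖Q‖^2 < 1 := by rw [hQn]; exact hkr
  have hQP : Q ≠ P := by
    intro h
    have h1 : Q 1 = P 1 := by rw [h]
    rw [hQ1, hP1] at h1
    nlinarith
  have hDrel : 2*k*D*c*r = k*r^2 + 1 := by
    rw [hD, hs2]
    field_simp
  have hD0 : 0 < D := by
    nlinarith [hDrel, mul_pos (mul_pos hk hc) hr, mul_pos hk (mul_pos hr hr)]
  have hsD : sOf k ≤ D := by
    nlinarith [hDrel, hks, sq_nonneg (r - sOf k), mul_pos (mul_pos hk hr) hc,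
      mul_nonneg (mul_nonneg (mul_nonneg hk.le hr.le) hs0.le) (sub_nonneg.2 hc1), hs0, hc]
  -- the vector w = (-P) ⊕ Q
  set w := mAdd k (-P) Q with hwdef
  have hnPd : k*‖-P‖^2 < 1 := by rw [norm_neg]; exact hPd
  have hdwpos0 : 0 < 1 + 2*k*⟪-P, Q⟫_ℝ + k^2*‖-P‖^2*‖Q‖^2 := den_pos k (-P) Q hk hnPd hQd
  have hwk : k*‖w‖^2 < 1 := by
    have h1 := mAdd_norm k (-P) Q (ne_of_gt hdwpos0)
    rw [← hwdef, norm_neg, hPn, hQn] at h1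
    have h1' := hdwpos0
    rw [norm_neg, hPn, hQn] at h1'
    have h2 : 0 < (1 - k*r^2) * (1 - k*r^2) / (1 + 2*k*⟪-P, Q⟫_ℝ + k^2*r^2*r^2) :=
      div_pos (mul_pos (by linarith) (by linarith)) h1'
    linarith [h1, h2]
  have hiPQ : ⟪-P, Q⟫_ℝ = r^2*sn^2 - r^2*c^2 := by
    rw [inner2, show (-P) 0 = -(P 0) from by simp, show (-P) 1 = -(P 1) from by simp,
      hP0, hP1, hQ0, hQ1]
    ring
  rw [hiPQ, norm_neg, hPn, hQn] at hdwpos0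
  set dw := 1 + 2*k*(r^2*sn^2 - r^2*c^2) + k^2*r^2*r^2 with hdwdef
  have hdwne : dw ≠ 0 := ne_of_gt hdwpos0
  have hwz : w = dw⁻¹ • ((1 + 2*k*(r^2*sn^2 - r^2*c^2) + k*r^2) • (-P) + (1 - k*r^2) • Q) := by
    rw [hwdef, mAdd, hiPQ, norm_neg, hPn, hQn, ← hdwdef]
  have hw0 : w 0 = (dw⁻¹ * (-(2*r*sn))) * (2*k*r^2*c*sn) := by
    rw [hwz]
    simp only [PiLp.smul_apply, PiLp.add_apply, PiLp.neg_apply, smul_eq_mul, hP0, hQ0]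
    linear_combination (dw⁻¹*(2*k*r^3*c))*hpyth
  have hw1 : w 1 = (dw⁻¹ * (-(2*r*sn))) * (1 - k*r^2*(c^2 - sn^2)) := by
    rw [hwz]
    simp only [PiLp.smul_apply, PiLp.add_apply, PiLp.neg_apply, smul_eq_mul, hP1, hQ1]
    ring
  have hw1ne : w 1 ≠ 0 := by
    rw [hw1]
    exact mul_ne_zero (mul_ne_zero (inv_ne_zero hdwne)
      (ne_of_lt (neg_lt_zero.2 h2rsn))) (ne_of_gt hW01)
  have hwne : w ≠ 0 := by
    intro h
    apply hw1ne
    rw [h]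
    simp
  have hwpos : 0 < ‖w‖ := norm_pos_iff.2 hwne
  have hskwsq : (Real.sqrt k * ‖w‖)^2 < 1 := by
    rw [mul_pow, Real.sq_sqrt hk.le]; exact hwk
  have hskw0 : 0 < Real.sqrt k * ‖w‖ := mul_pos hsk hwpos
  have hskw : Real.sqrt k * ‖w‖ < 1 := lt_one_of_sq _ hskwsq hskw0
  have hα : 0 < artanh (Real.sqrt k * ‖w‖) := artanh_pos' hskw0 hskw
  have htanhα : Real.tanh (artanh (Real.sqrt k * ‖w‖)) = Real.sqrt k * ‖w‖ :=
    tanh_artanh' hskw0.le hskw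
  -- v = log_P Q
  have hvK : logMap k P Q = ((((1 - k*r^2) / Real.sqrt k) * artanh (Real.sqrt k * ‖w‖)) / ‖w‖) • w := by
    rw [logMap, if_neg hQP, hPn, ← hwdef]
  set v := logMap k P Q with hvdef
  set C := ((1 - k*r^2) / Real.sqrt k) * artanh (Real.sqrt k * ‖w‖) with hCdef
  have hC : 0 < C := by rw [hCdef]; exact mul_pos (div_pos (by linarith) hsk) hα
  have hnv : ‖v‖ = C := by
    rw [hvK, norm_smul, Real.norm_eq_abs, abs_of_pos (div_pos hC hwpos),
      div_mul_cancel₀ _ (ne_of_gt hwpos)]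
  have hvne : v ≠ 0 := by
    rw [hvK]; exact smul_ne_zero (ne_of_gt (div_pos hC hwpos)) hwne
  set h : ℝ → ℝ := fun t => Real.tanh (artanh (Real.sqrt k * ‖w‖) * t) / (Real.sqrt k * C)
    with hhdef
  have hyk : ∀ t : ℝ, k * ‖h t • v‖^2 < 1 := by
    intro t
    rw [norm_smul, mul_pow, Real.norm_eq_abs, sq_abs, hnv]
    have hh2 : k * (h t ^2 * C^2) = Real.tanh (artanh (Real.sqrt k * ‖w‖) * t)^2 := by
      simp only [hhdef]
      rw [div_pow, mul_pow, Real.sq_sqrt hk.le]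
      field_simp
    rw [hh2]
    exact tanh_sq_lt_one _
  have hy0c : ∀ t : ℝ, (h t • v) 0 =
      (h t * (C/‖w‖) * (dw⁻¹ * (-(2*r*sn)))) * (2*k*r^2*c*sn) := by
    intro t
    rw [show (h t • v) 0 = h t * v 0 from by simp, hvK,
      show ((C/‖w‖) • w) 0 = (C/‖w‖) * (w 0) from by simp, hw0]
    ring
  have hy1c : ∀ t : ℝ, (h t • v) 1 =
      (h t * (C/‖w‖) * (dw⁻¹ * (-(2*r*sn)))) * (1 - k*r^2*(c^2 - sn^2)) := by
    intro t
    rw [show (h t • v) 1 = h t * v 1 from by simp, hvK,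
      show ((C/‖w‖) • w) 1 = (C/‖w‖) * (w 1) from by simp, hw1]
    ring
  have hinv : ∀ t : ℝ, ‖mAdd k P (h t • v)‖^2 + sOf k^2 = 2*D*(mAdd k P (h t • v) 0) :=
    fun t => core k r c sn (h t * (C/‖w‖) * (dw⁻¹ * (-(2*r*sn)))) D (sOf k) hk hr hc hkr
      hpyth hks hDrel P (h t • v) hP0 hP1 (hy0c t) (hy1c t) (hyk t)
  have hγg : ∀ t ∈ Set.Icc (0:ℝ) 1, expMap k P (t • v) = mAdd k P (h t • v) := by
    rintro t ⟨ht0, _⟩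
    rcases eq_or_lt_of_le ht0 with h0 | h0
    · rw [← h0, zero_smul, expMap, if_pos rfl]
      have hh0 : h 0 = 0 := by simp only [hhdef]; rw [mul_zero, Real.tanh_zero, zero_div]
      rw [hh0, zero_smul, mAdd_zero]
    · rw [expMap, if_neg (smul_ne_zero (ne_of_gt h0) hvne), hPn, norm_smul,
        Real.norm_eq_abs, abs_of_pos h0, hnv,
        show Real.sqrt k * (t * C) / (1 - k*r^2) = artanh (Real.sqrt k * ‖w‖) * t from by
          rw [hCdef]
          rw [div_eq_iff (show (1:ℝ) - k*r^2 ≠ 0 from by linarith)]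
          field_simp,
        smul_smul,
        show Real.tanh (artanh (Real.sqrt k * ‖w‖) * t) / (Real.sqrt k * (t * C)) * t = h t from by
          simp only [hhdef]
          rw [div_mul_eq_mul_div, div_eq_div_iff (by positivity) (by positivity)]
          ring]
  have hhcont : Continuous h := by
    rw [hhdef]
    exact (continuous_tanh'.comp (continuous_const.mul continuous_id)).div_const _
  set ψ : ℝ → ℝ := fun t => (1 + 2*k*(h t*⟪P,v⟫_ℝ) + k^2*r^2*((h t)^2*C^2))⁻¹ *
      ((1 + 2*k*(h t*⟪P,v⟫_ℝ) + k*((h t)^2*C^2))*(r*sn) + (1-k*r^2)*(h t * v 1)) with hψdef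
  have hdenpos : ∀ t, 0 < 1 + 2*k*(h t*⟪P,v⟫_ℝ) + k^2*r^2*((h t)^2*C^2) := by
    intro t
    have h1 := den_pos k P (h t • v) hk hPd (hyk t)
    rwa [real_inner_smul_right, hPn, norm_smul, mul_pow, Real.norm_eq_abs, sq_abs, hnv] at h1
  have hgψ : ∀ t, mAdd k P (h t • v) 1 = ψ t := by
    intro t
    rw [mAdd, real_inner_smul_right, hPn, norm_smul, mul_pow, Real.norm_eq_abs, sq_abs, hnv]
    simp only [hψdef, PiLp.smul_apply, PiLp.add_apply, smul_eq_mul, hP1]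
    try ring
  have hψcont : Continuous ψ := by
    rw [hψdef]
    refine Continuous.mul (Continuous.inv₀ ?_ fun t => (hdenpos t).ne') ?_
    · exact (continuous_const.add (continuous_const.mul (hhcont.mul continuous_const))).add
        (continuous_const.mul ((hhcont.pow 2).mul continuous_const))
    · exact (((continuous_const.add (continuous_const.mul (hhcont.mul continuous_const))).add
        (continuous_const.mul ((hhcont.pow 2).mul continuous_const))).mul continuous_const).add
        (continuous_const.mul (hhcont.mul continuous_const))
  have hψ0 : ψ 0 = r * sn := by
    have hh0 : h 0 = 0 := by simp only [hhdef]; rw [mul_zero, Real.tanh_zero, zero_div]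
    simp only [hψdef, hh0]
    norm_num
  have hQg : mAdd k P (h 1 • v) = Q := by
    have hone : h 1 * (C/‖w‖) = 1 := by
      simp only [hhdef]
      rw [mul_one, htanhα]
      field_simp
    have hh1v : h 1 • v = w := by
      rw [hvK, smul_smul, hone, one_smul]
    rw [hh1v, hwdef]
    apply mAdd_cancel
    · have h1 := den_pos k (-P) Q hk hnPd hQd
      rw [inner_neg_left, norm_neg] at h1
      exact h1.ne'
    · rw [hPn]
      exact (show (0:ℝ) < 1 - k*r^2 from by linarith).ne'
  have hψ1 : ψ 1 = -(r*sn) := by rw [← hgψ 1, hQg, hQ1]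
  obtain ⟨t0, ht0, hψt0⟩ : ∃ t ∈ Set.Icc (0:ℝ) 1, ψ t = 0 := by
    have hsub := intermediate_value_Icc' (by norm_num : (0:ℝ) ≤ 1) hψcont.continuousOn
    have hmem : (0:ℝ) ∈ Set.Icc (ψ 1) (ψ 0) := by
      rw [hψ0, hψ1]
      exact ⟨neg_nonpos.2 hrsn.le, hrsn.le⟩
    obtain ⟨t0, ht0m, heq⟩ := hsub hmem
    exact ⟨t0, ht0m, heq⟩
  have hzd : k*‖mAdd k P (h t0 • v)‖^2 < 1 := by
    have h1 := mAdd_norm k P (h t0 • v) (ne_of_gt (den_pos k P (h t0 • v) hk hPd (hyk t0)))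
    have h2 : 0 < (1 - k*‖P‖^2)*(1 - k*‖h t0 • v‖^2) /
        (1 + 2*k*⟪P, h t0 • v⟫_ℝ + k^2*‖P‖^2*‖h t0 • v‖^2) :=
      div_pos (mul_pos (by linarith [hPd]) (by linarith [hyk t0]))
        (den_pos k P (h t0 • v) hk hPd (hyk t0))
    linarith [h1, h2]
  have hz1 : mAdd k P (h t0 • v) 1 = 0 := by rw [hgψ t0, hψt0]
  have hzinv := hinv t0
  have hzlt : ‖mAdd k P (h t0 • v)‖ < sOf k := norm_lt_s k (sOf k) _ hk hs0 hks hzd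
  constructor
  · refine ⟨t0, ht0, ?_⟩
    show ‖expMap k P (t0 • v)‖ = D - Real.sqrt (D^2 - sOf k^2)
    rw [hγg t0 ht0]
    exact min_point_lemma D (sOf k) _ hD0 hsD hs0 hzinv hz1 hzlt
  · rintro x ⟨t, ht, rfl⟩
    show D - Real.sqrt (D^2 - sOf k^2) ≤ ‖expMap k P (t • v)‖
    rw [hγg t ht]
    exact lower_bound_lemma D (sOf k) _ hD0 hsD hs0 (hinv t)


end HypFL
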